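/- arXiv:2604.23791 — 4 statements merged into one kernel-verified Lean document; each statement's English description precedes it below -/
import Mathlib

section
/- Let (Ω, ℱ, P) be a probability space, let N ≥ 1, and let A₁, …, A_N be events with p := min_{1≤k≤N} P(A_k) > 0. Let C ≥ 1 and ρ ∈ (0,1), and suppose that for every integer n ≥ 1, every k with k + n ≤ N, every event D in σ(A₁, …, A_k) with P(D) > 0, and every event B in σ(A_{k+n}, …, A_N), one has |P(B ∣ D) − P(B)| ≤ C·ρⁿ. Let L₀ ≥ 0 be an integer with C·ρ^{L₀+1} ≤ p/2. Then P(⋃_{k=1}^N A_k) ≥ 1 − exp(−S_N/(2(L₀+1))) ≥ 1 − exp(−pN/(2(L₀+1))), where S_N := ∑_{k=1}^N P(A_k). -/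
open MeasureTheory

/-- Proposition (geometric φ-mixing with positive lower mass): if the finite restricted
φ-mixing coefficient at every lag `n` is at most `C·ρⁿ`, `p = min_{1≤k≤N} P(A k) > 0`,
and `C·ρ^{L₀+1} ≤ p/2`, then
`P(⋃ₖ A k) ≥ 1 − exp(−S_N/(2(L₀+1))) ≥ 1 − exp(−pN/(2(L₀+1)))`. -/
theorem geometric_phi_mixing_bound
    {Ω : Type*} [MeasurableSpace Ω] (P : Measure Ω) [IsProbabilityMeasure P]
    (N : ℕ) (hN : 1 ≤ N)
    (A : ℕ → Set Ω) (hA : ∀ k ∈ Finset.Icc 1 N, MeasurableSet (A k))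
    (p : ℝ) (hp : p = sInf ((fun k => (P (A k)).toReal) '' Set.Icc 1 N)) (hp0 : 0 < p)
    (C ρ : ℝ) (hC : 1 ≤ C) (hρ : ρ ∈ Set.Ioo (0 : ℝ) 1)
    (hmix : ∀ n : ℕ, 1 ≤ n → ∀ k, 1 ≤ k → k + n ≤ N →
      ∀ D : Set Ω,
        MeasurableSet[MeasurableSpace.generateFrom (A '' Set.Icc 1 k)] D → 0 < P D →
      ∀ B : Set Ω,
        MeasurableSet[MeasurableSpace.generateFrom (A '' Set.Icc (k + n) N)] B →
          |(P (B ∩ D)).toReal / (P D).toReal - (P B).toReal| ≤ C * ρ ^ n)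
    (L₀ : ℕ) (hL₀ : C * ρ ^ (L₀ + 1) ≤ p / 2) :
    1 - Real.exp (-(∑ k ∈ Finset.Icc 1 N, (P (A k)).toReal) / (2 * ((L₀ : ℝ) + 1))) ≤
        (P (⋃ k ∈ Finset.Icc 1 N, A k)).toReal ∧
    1 - Real.exp (-(p * (N : ℝ)) / (2 * ((L₀ : ℝ) + 1))) ≤
        1 - Real.exp (-(∑ k ∈ Finset.Icc 1 N, (P (A k)).toReal) /
          (2 * ((L₀ : ℝ) + 1))) := by
  obtain ⟨hρ0, hρ1⟩ := hρ
  have hC0 : (0:ℝ) < C := lt_of_lt_of_le one_pos hC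
  set f : ℕ → ℝ := fun k => (P (A k)).toReal with hfdef
  set L : ℕ := L₀ + 1 with hLdef
  have hLpos : 0 < L := Nat.succ_pos _
  have hfnonneg : ∀ k, 0 ≤ f k := fun k => ENNReal.toReal_nonneg
  have hfle1 : ∀ k, f k ≤ 1 := by
    intro k
    have := prob_le_one (μ := P) (s := A k)
    simpa [hfdef] using ENNReal.toReal_le_toReal (measure_ne_top P _) (by simp) |>.2 this
  have hpf : ∀ k ∈ Finset.Icc 1 N, p ≤ f k := by
    intro k hk
    rw [hp]
    refine csInf_le ((Set.finite_Icc 1 N).image _).bddBelow ⟨k, ?_, rfl⟩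
    simpa [Set.mem_Icc] using Finset.mem_Icc.mp hk
  set S : ℝ := ∑ k ∈ Finset.Icc 1 N, f k with hSdef
  -- second conjunct
  have hcard : (Finset.Icc 1 N).card = N := by simp
  have hSpN : p * N ≤ S := by
    have : ∑ _k ∈ Finset.Icc 1 N, p ≤ S := Finset.sum_le_sum hpf
    calc p * N = ∑ _k ∈ Finset.Icc 1 N, p := by
          rw [Finset.sum_const, hcard, nsmul_eq_mul]; ring
      _ ≤ S := this
  have hsecond : 1 - Real.exp (-(p * (N : ℝ)) / (2 * ((L₀ : ℝ) + 1))) ≤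
      1 - Real.exp (-S / (2 * ((L₀ : ℝ) + 1))) := by
    have h2L : (0:ℝ) < 2 * ((L₀ : ℝ) + 1) := by positivity
    have hd : -S / (2 * ((L₀ : ℝ) + 1)) ≤ -(p * (N:ℝ)) / (2 * ((L₀ : ℝ) + 1)) := by
      rw [div_le_div_iff₀ h2L h2L]
      nlinarith
    have := Real.exp_le_exp.mpr hd
    linarith
  refine ⟨?_, hsecond⟩
  -- fiberwise decomposition
  classical
  have hmaps : ∀ k ∈ Finset.Icc 1 N, (k - 1) % L ∈ Finset.range L :=
    fun k _ => Finset.mem_range.mpr (Nat.mod_lt _ hLpos)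
  have hfiber : ∑ r ∈ Finset.range L,
      ∑ k ∈ (Finset.Icc 1 N).filter (fun k => (k - 1) % L = r), f k = S :=
    Finset.sum_fiberwise_of_maps_to hmaps f
  obtain ⟨r, hrmem, hrge⟩ : ∃ r ∈ Finset.range L,
      S / L ≤ ∑ k ∈ (Finset.Icc 1 N).filter (fun k => (k - 1) % L = r), f k := by
    apply Finset.exists_le_of_sum_le ⟨0, Finset.mem_range.mpr hLpos⟩
    rw [hfiber, Finset.sum_const, Finset.card_range, nsmul_eq_mul]
    rw [mul_div_cancel₀]
    exact_mod_cast hLpos.ne'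
  set F : Finset ℕ := (Finset.Icc 1 N).filter (fun k => (k - 1) % L = r) with hFdef
  set m : ℕ := F.card with hmdef
  set e : Fin m ↪o ℕ := F.orderEmbOfFin rfl with hedef
  set e' : ℕ → ℕ := fun i => if h : i < m then e ⟨i, h⟩ else 0 with he'def
  have hmem : ∀ i (h : i < m), e' i ∈ F := by
    intro i h
    simp only [he'def, dif_pos h]
    exact Finset.orderEmbOfFin_mem F rfl _
  have hmono : ∀ i j, i < j → j < m → e' i < e' j := by
    intro i j hij hj
    simp only [he'def, dif_pos hj, dif_pos (hij.trans hj)]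
    exact e.strictMono (by exact_mod_cast hij)
  have hIcc : ∀ i (h : i < m), 1 ≤ e' i ∧ e' i ≤ N := by
    intro i h
    have := hmem i h
    rw [hFdef, Finset.mem_filter, Finset.mem_Icc] at this
    exact this.1
  have hres : ∀ i (h : i < m), (e' i - 1) % L = r := by
    intro i h
    have := hmem i h
    rw [hFdef, Finset.mem_filter] at this
    exact this.2
  have himage : Finset.image e' (Finset.range m) = F := by
    apply Finset.eq_of_subset_of_card_le
    · intro x hx
      obtain ⟨i, hi, rfl⟩ := Finset.mem_image.mp hx
      exact hmem i (Finset.mem_range.mp hi)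
    · rw [Finset.card_image_of_injOn, Finset.card_range]
      intro a ha b hb hab
      by_contra hne
      rcases lt_or_gt_of_ne hne with h | h
      · exact absurd hab (hmono a b h (Finset.mem_coe.mp hb |> Finset.mem_range.mp)).ne
      · exact absurd hab.symm (hmono b a h (Finset.mem_coe.mp ha |> Finset.mem_range.mp)).ne
  have hfac : ∀ i, (0:ℝ) ≤ 1 - f (e' i) / 2 := by
    intro i; have := hfle1 (e' i); linarith
  -- key induction
  have key : ∀ j, j ≤ m →
      (P (⋂ i ∈ Finset.range j, (A (e' i))ᶜ)).toReal ≤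
        ∏ i ∈ Finset.range j, (1 - f (e' i) / 2) := by
    intro j
    induction j with
    | zero => intro _; simp
    | succ j ih =>
      intro hj
      have hjm : j < m := hj
      have ihj := ih hjm.le
      set D : Set Ω := ⋂ i ∈ Finset.range j, (A (e' i))ᶜ with hDdef
      have hDsucc : (⋂ i ∈ Finset.range (j+1), (A (e' i))ᶜ) = (A (e' j))ᶜ ∩ D := by
        rw [Finset.range_add_one, Finset.set_biInter_insert]
      have hjIcc := hIcc j hjm
      have hjmem : e' j ∈ Finset.Icc 1 N := Finset.mem_Icc.mpr hjIcc
      have hAm : MeasurableSet (A (e' j)) := hA _ hjmem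
      have hBval : (P (A (e' j))ᶜ).toReal = 1 - f (e' j) := by
        rw [prob_compl_eq_one_sub hAm, ENNReal.toReal_sub_of_le prob_le_one (by simp)]
        simp [hfdef]
      rcases eq_or_ne (P D) 0 with hD0 | hD0
      · have hz : P ((A (e' j))ᶜ ∩ D) = 0 :=
          measure_mono_null Set.inter_subset_right hD0
        rw [hDsucc, hz]
        simpa using Finset.prod_nonneg (fun i _ => hfac i)
      · have hDpos : 0 < P D := hD0.bot_lt
        have hDr : 0 < (P D).toReal := ENNReal.toReal_pos hD0 (measure_ne_top P D)
        have hple : p ≤ f (e' j) := hpf _ hjmem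
        have hkey : (P ((A (e' j))ᶜ ∩ D)).toReal ≤ (P D).toReal * (1 - f (e' j) / 2) := by
          rcases Nat.eq_zero_or_pos j with hj0 | hjpos
          · have hDuniv : D = Set.univ := by subst hj0; simp [hDdef]
            have h1 : (P (Set.univ : Set Ω)).toReal = 1 := by simp
            rw [hDuniv, Set.inter_univ, hBval, h1]
            nlinarith [hfnonneg (e' j)]
          · set k : ℕ := e' (j-1) with hkdef
            set n : ℕ := e' j - k with hndef
            have hj1m : j - 1 < m := lt_of_le_of_lt (Nat.sub_le _ _) hjm
            have hlt : k < e' j := hmono (j-1) j (by omega) hjm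
            have hkn : k + n = e' j := by omega
            have hkIcc := hIcc (j-1) hj1m
            have hdvd : L ∣ n := by
              have h1 := hres (j-1) hj1m
              have h2 := hres j hjm
              have hmod : (k - 1) % L = (e' j - 1) % L := by rw [h1, h2]
              have : L ∣ (e' j - 1) - (k - 1) :=
                (Nat.modEq_iff_dvd' (by omega)).mp hmod
              have heq : (e' j - 1) - (k - 1) = n := by omega
              rwa [heq] at this
            have hn0 : 0 < n := by omega
            have hnL : L ≤ n := Nat.le_of_dvd hn0 hdvd
            have hDmeas : MeasurableSet[MeasurableSpace.generateFrom
                (A '' Set.Icc 1 k)] D := by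
              apply Finset.measurableSet_biInter
              intro i hi
              have him : i < m := lt_trans (Finset.mem_range.mp hi) hjm
              have hle : e' i ≤ k := by
                rcases Nat.lt_or_ge i (j-1) with h | h
                · exact (hmono i (j-1) h hj1m).le
                · have hij : i < j := Finset.mem_range.mp hi
                  have : i = j - 1 := by omega
                  subst this; rfl
              exact (MeasurableSpace.measurableSet_generateFrom
                (Set.mem_image_of_mem A (Set.mem_Icc.mpr ⟨(hIcc i him).1, hle⟩))).compl
            have hBmeas : MeasurableSet[MeasurableSpace.generateFrom
                (A '' Set.Icc (k + n) N)] (A (e' j))ᶜ :=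
              (MeasurableSpace.measurableSet_generateFrom
                (Set.mem_image_of_mem A (Set.mem_Icc.mpr ⟨hkn.le, hjIcc.2⟩))).compl
            have hmixed := hmix n hn0 k hkIcc.1 (by omega) D hDmeas hDpos _ hBmeas
            have hCn : C * ρ ^ n ≤ p / 2 := by
              refine le_trans ?_ hL₀
              have : ρ ^ n ≤ ρ ^ L := pow_le_pow_of_le_one hρ0.le hρ1.le hnL
              have := mul_le_mul_of_nonneg_left this hC0.le
              simpa [hLdef] using this
            have habs := abs_le.mp (le_trans hmixed hCn)
            have h1 : (P ((A (e' j))ᶜ ∩ D)).toReal / (P D).toReal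
                ≤ 1 - f (e' j) + p / 2 := by
              have := habs.2
              rw [hBval] at this
              linarith
            have h2 := (div_le_iff₀ hDr).mp h1
            calc (P ((A (e' j))ᶜ ∩ D)).toReal
                ≤ (1 - f (e' j) + p / 2) * (P D).toReal := h2
              _ ≤ (1 - f (e' j) / 2) * (P D).toReal := by
                  apply mul_le_mul_of_nonneg_right _ hDr.le
                  linarith
              _ = (P D).toReal * (1 - f (e' j) / 2) := mul_comm _ _
        rw [hDsucc, Finset.prod_range_succ]
        calc (P ((A (e' j))ᶜ ∩ D)).toReal
            ≤ (P D).toReal * (1 - f (e' j) / 2) := hkey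
          _ ≤ (∏ i ∈ Finset.range j, (1 - f (e' i) / 2)) * (1 - f (e' j) / 2) :=
              mul_le_mul_of_nonneg_right ihj (hfac j)
  have hinter := key m le_rfl
  -- product bound by exponential
  have hsumF : ∑ i ∈ Finset.range m, f (e' i) = ∑ k ∈ F, f k := by
    rw [← himage, Finset.sum_image]
    intro a ha b hb hab
    by_contra hne
    rcases lt_or_gt_of_ne hne with h | h
    · exact absurd hab (hmono a b h (Finset.mem_range.mp hb)).ne
    · exact absurd hab.symm (hmono b a h (Finset.mem_range.mp ha)).ne
  have hprodexp : ∏ i ∈ Finset.range m, (1 - f (e' i) / 2) ≤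
      Real.exp (-(∑ k ∈ F, f k) / 2) := by
    have h1 : ∏ i ∈ Finset.range m, (1 - f (e' i) / 2) ≤
        ∏ i ∈ Finset.range m, Real.exp (-(f (e' i) / 2)) := by
      apply Finset.prod_le_prod (fun i _ => hfac i)
      intro i _
      have := Real.add_one_le_exp (-(f (e' i) / 2))
      linarith
    refine h1.trans (le_of_eq ?_)
    rw [← Real.exp_sum]
    congr 1
    rw [← hsumF, neg_div, Finset.sum_div]
    exact Finset.sum_neg_distrib _
  -- identify the intersection
  have hcap : (⋂ i ∈ Finset.range m, (A (e' i))ᶜ) = ⋂ k ∈ F, (A k)ᶜ := by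
    rw [← himage, Finset.set_biInter_finset_image]
  have hFsub : F ⊆ Finset.Icc 1 N := Finset.filter_subset _ _
  have hmeasU : MeasurableSet (⋃ k ∈ F, A k) :=
    Finset.measurableSet_biUnion F (fun k hk => hA k (hFsub hk))
  have hunion : (P (⋃ k ∈ F, A k)).toReal = 1 - (P (⋂ k ∈ F, (A k)ᶜ)).toReal := by
    have hcompl : (⋃ k ∈ F, A k)ᶜ = ⋂ k ∈ F, (A k)ᶜ := by
      simp [Set.compl_iUnion]
    rw [← hcompl, prob_compl_eq_one_sub hmeasU,
      ENNReal.toReal_sub_of_le prob_le_one (by simp)]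
    simp
  have hUmono : (P (⋃ k ∈ F, A k)).toReal ≤
      (P (⋃ k ∈ Finset.Icc 1 N, A k)).toReal := by
    apply ENNReal.toReal_mono (measure_ne_top P _)
    apply measure_mono
    exact Set.biUnion_subset_biUnion_left (by exact_mod_cast hFsub)
  have hLcast : ((L : ℝ)) = (L₀ : ℝ) + 1 := by push_cast [hLdef]; ring
  have hfinal : -(∑ k ∈ F, f k) / 2 ≤ -S / (2 * ((L₀ : ℝ) + 1)) := by
    have hL' : (0:ℝ) < L := by exact_mod_cast hLpos
    rw [← hLcast]
    rw [div_le_div_iff₀ (by norm_num) (by positivity)]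
    have hST := (div_le_iff₀ hL').mp hrge
    nlinarith
  calc 1 - Real.exp (-S / (2 * ((L₀ : ℝ) + 1)))
      ≤ 1 - Real.exp (-(∑ k ∈ F, f k) / 2) := by
        have := Real.exp_le_exp.mpr hfinal
        linarith
    _ ≤ 1 - ∏ i ∈ Finset.range m, (1 - f (e' i) / 2) := by linarith
    _ ≤ 1 - (P (⋂ k ∈ F, (A k)ᶜ)).toReal := by
        rw [← hcap]; linarith
    _ = (P (⋃ k ∈ F, A k)).toReal := hunion.symm
    _ ≤ (P (⋃ k ∈ Finset.Icc 1 N, A k)).toReal := hUmono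
end

section
/- Let (Ω, ℱ, P) be a probability space, let N ≥ 2, and let A₁, …, A_N be events. Let C ≥ 1 and γ > 0, and suppose that for every integer n ≥ 1, every k with k + n ≤ N, every event D in σ(A₁, …, A_k), and every event B in σ(A_{k+n}, …, A_N), one has |P(D ∩ B) − P(D)·P(B)| ≤ C·n^{−γ}. Then for every θ ∈ (0, 1], P(⋃_{k=1}^N A_k) ≥ 1 − exp(−(1/2)·S_N·N^{−θ}) − 2C·N^{1−θ(γ+1)}, where S_N := ∑_{k=1}^N P(A_k). -/
open MeasureTheory

set_option maxHeartbeats 2000000 in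
/-- Proposition (polynomial α-mixing spacings, parametrised form): if the finite
restricted strong-mixing coefficient at every lag `n` is at most `C·n^{−γ}`, then for
every `θ ∈ (0, 1]`,
`P(⋃ₖ A k) ≥ 1 − exp(−(1/2)·S_N·N^{−θ}) − 2C·N^{1−θ(γ+1)}`. -/
theorem polynomial_alpha_mixing_bound
    {Ω : Type*} [MeasurableSpace Ω] (P : Measure Ω) [IsProbabilityMeasure P]
    (N : ℕ) (hN : 2 ≤ N)
    (A : ℕ → Set Ω) (hA : ∀ k ∈ Finset.Icc 1 N, MeasurableSet (A k))
    (C γ : ℝ) (hC : 1 ≤ C) (hγ : 0 < γ)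
    (hmix : ∀ n : ℕ, 1 ≤ n → ∀ k, 1 ≤ k → k + n ≤ N →
      ∀ D : Set Ω,
        MeasurableSet[MeasurableSpace.generateFrom (A '' Set.Icc 1 k)] D →
      ∀ B : Set Ω,
        MeasurableSet[MeasurableSpace.generateFrom (A '' Set.Icc (k + n) N)] B →
          |(P (D ∩ B)).toReal - (P D).toReal * (P B).toReal| ≤ C * (n : ℝ) ^ (-γ)) :
    ∀ θ : ℝ, 0 < θ → θ ≤ 1 →
      1 - Real.exp (-(1 / 2) * (∑ k ∈ Finset.Icc 1 N, (P (A k)).toReal) *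
            (N : ℝ) ^ (-θ)) -
          2 * C * (N : ℝ) ^ (1 - θ * (γ + 1)) ≤
        (P (⋃ k ∈ Finset.Icc 1 N, A k)).toReal := by
  intro θ hθ0 hθ1
  set p : ℕ → ℝ := fun k => (P (A k)).toReal with hpdef
  set S : ℝ := ∑ k ∈ Finset.Icc 1 N, p k with hSdef
  have hN0 : (0:ℝ) < N := by positivity
  have hN1 : (1:ℝ) ≤ N := by exact_mod_cast (by omega : 1 ≤ N)
  have h1 : (1:ℝ) ≤ (N:ℝ) ^ θ := Real.one_le_rpow hN1 hθ0.le
  have hNθN : (N:ℝ) ^ θ ≤ N := by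
    calc (N:ℝ) ^ θ ≤ (N:ℝ) ^ (1:ℝ) := Real.rpow_le_rpow_of_exponent_le hN1 hθ1
    _ = N := Real.rpow_one _
  set m : ℕ := ⌈(N:ℝ) ^ θ⌉₊ with hmdef
  have hm1 : 1 ≤ m := Nat.one_le_ceil_iff.mpr (by positivity)
  have hm0' : 0 < m := hm1
  have hmN : m ≤ N := Nat.ceil_le.mpr (by exact_mod_cast hNθN)
  have hNθm : (N:ℝ) ^ θ ≤ m := Nat.le_ceil _
  have hm0 : (0:ℝ) < m := lt_of_lt_of_le (by positivity) hNθm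
  have hm2 : (m:ℝ) ≤ 2 * (N:ℝ) ^ θ := by
    have := Nat.ceil_lt_add_one (by positivity : (0:ℝ) ≤ (N:ℝ) ^ θ)
    simp only [← hmdef] at this
    linarith
  have hp0 : ∀ k, 0 ≤ p k := fun k => ENNReal.toReal_nonneg
  have hp1 : ∀ k, p k ≤ 1 := by
    intro k
    have h := ENNReal.toReal_mono ENNReal.one_ne_top (prob_le_one (μ := P) (s := A k))
    simpa using h
  have hS0 : 0 ≤ S := Finset.sum_nonneg fun k _ => hp0 k
  have hcompl : ∀ k ∈ Finset.Icc 1 N, (P (A k)ᶜ).toReal = 1 - p k := by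
    intro k hk
    rw [prob_compl_eq_one_sub (hA k hk),
      ENNReal.toReal_sub_of_le prob_le_one ENNReal.one_ne_top]
    simp [hpdef]
  -- partition of [1, N] into arithmetic progressions mod m
  have hsum : ∑ b ∈ Finset.Icc 1 m, ∑ j ∈ Finset.range ((N - b) / m + 1), p (b + j * m)
      = S := by
    rw [hSdef, Finset.sum_sigma']
    refine Finset.sum_nbij' (i := fun a => a.1 + a.2 * m)
      (j := fun k => ⟨(k - 1) % m + 1, (k - 1) / m⟩) ?_ ?_ ?_ ?_ ?_
    · rintro ⟨b, j⟩ h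
      simp only [Finset.mem_sigma, Finset.mem_Icc, Finset.mem_range] at h
      have hjm : j * m ≤ N - b := (Nat.le_div_iff_mul_le hm0').mp (by omega)
      have hbN : b ≤ N := le_trans h.1.2 hmN
      simp only [Finset.mem_Icc]
      omega
    · intro k hk
      simp only [Finset.mem_Icc] at hk
      have hlt : (k - 1) % m < m := Nat.mod_lt _ hm0'
      have hmd := Nat.mod_add_div' (k - 1) m
      simp only [Finset.mem_sigma, Finset.mem_Icc, Finset.mem_range]
      refine ⟨⟨by omega, by omega⟩, ?_⟩
      rw [Nat.lt_succ_iff, Nat.le_div_iff_mul_le hm0']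
      omega
    · rintro ⟨b, j⟩ h
      simp only [Finset.mem_sigma, Finset.mem_Icc, Finset.mem_range] at h
      have hb1 : 1 ≤ b := h.1.1
      have hbm : b - 1 < m := by omega
      have e1 : b + j * m - 1 = (b - 1) + j * m := by omega
      have e2 : (b + j * m - 1) % m = b - 1 := by
        rw [e1, Nat.add_mul_mod_self_right, Nat.mod_eq_of_lt hbm]
      have e3 : (b + j * m - 1) / m = j := by
        rw [e1, Nat.add_mul_div_right _ _ hm0', Nat.div_eq_of_lt hbm, Nat.zero_add]
      have hb' : b - 1 + 1 = b := by omega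
      show (⟨(b + j * m - 1) % m + 1, (b + j * m - 1) / m⟩ : (_ : ℕ) × ℕ) = ⟨b, j⟩
      rw [e2, e3, hb']
    · intro k hk
      simp only [Finset.mem_Icc] at hk
      have hmd := Nat.mod_add_div' (k - 1) m
      show (k - 1) % m + 1 + (k - 1) / m * m = k
      omega
    · rintro ⟨b, j⟩ _
      rfl
  -- pigeonhole: one progression carries at least S / m of the mass
  obtain ⟨b, hbmem, hbsum⟩ :
      ∃ b ∈ Finset.Icc 1 m, S / m ≤ ∑ j ∈ Finset.range ((N - b) / m + 1), p (b + j * m) := by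
    apply Finset.exists_le_of_sum_le ⟨1, Finset.mem_Icc.mpr ⟨le_refl 1, hm1⟩⟩
    have hmne : (m:ℝ) ≠ 0 := ne_of_gt hm0
    have hcard : (Finset.Icc 1 m).card = m := by rw [Nat.card_Icc]; omega
    rw [hsum, Finset.sum_const, hcard, nsmul_eq_mul, mul_div_cancel₀ _ hmne]
  rw [Finset.mem_Icc] at hbmem
  obtain ⟨hb1, hbm⟩ := hbmem
  have hbN : b ≤ N := le_trans hbm hmN
  set r : ℕ := (N - b) / m + 1 with hrdef
  have hidx : ∀ i, i < r → b + i * m ≤ N := by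
    intro i hi
    rw [hrdef] at hi
    have : i ≤ (N - b) / m := by omega
    have := (Nat.le_div_iff_mul_le hm0').mp this
    omega
  set c : ℝ := C * (m:ℝ) ^ (-γ) with hcdef
  have hc0 : 0 ≤ c := by
    rw [hcdef]; positivity
  -- the key induction along the progression
  have key : ∀ j, 1 ≤ j → j ≤ r →
      (P (⋂ i ∈ Finset.range j, (A (b + i * m))ᶜ)).toReal ≤
        (∏ i ∈ Finset.range j, (1 - p (b + i * m))) + ((j:ℝ) - 1) * c := by
    intro j hj1
    induction j, hj1 using Nat.le_induction with
    | base =>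
      intro _
      have hbIcc : b ∈ Finset.Icc 1 N := Finset.mem_Icc.mpr ⟨hb1, hbN⟩
      simp only [Finset.range_one, Finset.prod_singleton, Finset.set_biInter_singleton,
        Nat.cast_one, Nat.zero_mul, Nat.add_zero]
      rw [hcompl b hbIcc]
      simp
    | succ n hn ih =>
      intro hnr
      have hnm : b + n * m ≤ N := hidx n (by omega)
      set k := b + (n - 1) * m with hkdef
      have hk1 : 1 ≤ k := le_trans hb1 (Nat.le_add_right b _)
      have hkm : k + m = b + n * m := by
        rw [hkdef]
        have : (n - 1) * m + m = n * m := by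
          have : n - 1 + 1 = n := by omega
          calc (n - 1) * m + m = (n - 1 + 1) * m := by rw [Nat.succ_mul]
          _ = n * m := by rw [this]
        omega
      have hkmN : k + m ≤ N := by rw [hkm]; exact hnm
      set D : Set Ω := ⋂ i ∈ Finset.range n, (A (b + i * m))ᶜ with hDdef
      have hD : MeasurableSet[MeasurableSpace.generateFrom (A '' Set.Icc 1 k)] D := by
        refine Finset.measurableSet_biInter _ fun i hi => ?_
        rw [Finset.mem_range] at hi
        have hmem : A (b + i * m) ∈ A '' Set.Icc 1 k := by
          refine ⟨b + i * m, ?_, rfl⟩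
          constructor
          · exact le_trans hb1 (Nat.le_add_right b _)
          · rw [hkdef]
            exact Nat.add_le_add_left (Nat.mul_le_mul_right m (by omega)) b
        exact (MeasurableSpace.measurableSet_generateFrom hmem).compl
      set B : Set Ω := (A (b + n * m))ᶜ with hBdef
      have hB : MeasurableSet[MeasurableSpace.generateFrom (A '' Set.Icc (k + m) N)] B := by
        have hmem : A (b + n * m) ∈ A '' Set.Icc (k + m) N :=
          ⟨b + n * m, ⟨le_of_eq hkm, hnm⟩, rfl⟩
        exact (MeasurableSpace.measurableSet_generateFrom hmem).compl
      have habs := hmix m hm1 k hk1 hkmN D hD B hB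
      have hDB : (P (D ∩ B)).toReal ≤ (P D).toReal * (P B).toReal + c := by
        have h := (abs_le.mp habs).2
        rw [hcdef]
        linarith
      have hQ : (⋂ i ∈ Finset.range (n + 1), (A (b + i * m))ᶜ) = D ∩ B := by
        rw [Finset.range_add_one, Finset.set_biInter_insert, hDdef, hBdef, Set.inter_comm]
      have hPB : (P B).toReal = 1 - p (b + n * m) := by
        rw [hBdef]
        exact hcompl _ (Finset.mem_Icc.mpr ⟨le_trans hb1 (Nat.le_add_right b _), hnm⟩)
      have hIH := ih (by omega)
      have hprod0 : 0 ≤ ∏ i ∈ Finset.range n, (1 - p (b + i * m)) :=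
        Finset.prod_nonneg fun i _ => by linarith [hp1 (b + i * m)]
      have h1p0 : 0 ≤ 1 - p (b + n * m) := by linarith [hp1 (b + n * m)]
      have h1p1 : 1 - p (b + n * m) ≤ 1 := by linarith [hp0 (b + n * m)]
      have hPD0 : 0 ≤ (P D).toReal := ENNReal.toReal_nonneg
      have hn1 : (1:ℝ) ≤ n := by exact_mod_cast hn
      rw [hQ, Finset.prod_range_succ]
      rw [hPB] at hDB
      have e1 : (P D).toReal * (1 - p (b + n * m)) ≤
          ((∏ i ∈ Finset.range n, (1 - p (b + i * m))) + ((n:ℝ) - 1) * c) *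
            (1 - p (b + n * m)) :=
        mul_le_mul_of_nonneg_right hIH h1p0
      have e2 : (((n:ℝ) - 1) * c) * (1 - p (b + n * m)) ≤ ((n:ℝ) - 1) * c :=
        mul_le_of_le_one_right (by nlinarith) h1p1
      push_cast
      nlinarith [e1, e2, hDB, hc0, hprod0]
  have hkey := key r (by rw [hrdef]; exact Nat.le_add_left 1 _) le_rfl
  -- relate to the big union
  have hmemIcc : ∀ i ∈ Finset.range r, b + i * m ∈ Finset.Icc 1 N := by
    intro i hi
    rw [Finset.mem_range] at hi
    exact Finset.mem_Icc.mpr ⟨le_trans hb1 (Nat.le_add_right b _), hidx i hi⟩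
  have hsubset : (⋃ i ∈ Finset.range r, A (b + i * m)) ⊆ ⋃ k ∈ Finset.Icc 1 N, A k := by
    intro x hx
    simp only [Set.mem_iUnion] at hx ⊢
    obtain ⟨i, hi, hxi⟩ := hx
    exact ⟨b + i * m, hmemIcc i hi, hxi⟩
  have hmeasU : MeasurableSet (⋃ i ∈ Finset.range r, A (b + i * m)) :=
    Finset.measurableSet_biUnion _ fun i hi => hA _ (hmemIcc i hi)
  have hPI : (P (⋂ i ∈ Finset.range r, (A (b + i * m))ᶜ)).toReal =
      1 - (P (⋃ i ∈ Finset.range r, A (b + i * m))).toReal := by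
    have hcomp : (⋂ i ∈ Finset.range r, (A (b + i * m))ᶜ) =
        (⋃ i ∈ Finset.range r, A (b + i * m))ᶜ := by
      simp [Set.compl_iUnion]
    rw [hcomp, prob_compl_eq_one_sub hmeasU,
      ENNReal.toReal_sub_of_le prob_le_one ENNReal.one_ne_top]
    simp
  have hmono : (P (⋃ i ∈ Finset.range r, A (b + i * m))).toReal ≤
      (P (⋃ k ∈ Finset.Icc 1 N, A k)).toReal :=
    ENNReal.toReal_mono (measure_ne_top P _) (measure_mono hsubset)
  -- product ≤ exponential bound
  have hprodexp : (∏ i ∈ Finset.range r, (1 - p (b + i * m))) ≤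
      Real.exp (-(1 / 2) * S * (N:ℝ) ^ (-θ)) := by
    have step1 : (∏ i ∈ Finset.range r, (1 - p (b + i * m))) ≤
        ∏ i ∈ Finset.range r, Real.exp (-(p (b + i * m))) := by
      refine Finset.prod_le_prod (fun i _ => by linarith [hp1 (b + i * m)]) fun i _ => ?_
      have := Real.add_one_le_exp (-(p (b + i * m)))
      linarith
    have step2 : (∏ i ∈ Finset.range r, Real.exp (-(p (b + i * m)))) =
        Real.exp (-(∑ j ∈ Finset.range r, p (b + j * m))) := by
      rw [← Real.exp_sum, Finset.sum_neg_distrib]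
    have step3 : Real.exp (-(∑ j ∈ Finset.range r, p (b + j * m))) ≤
        Real.exp (-(1 / 2) * S * (N:ℝ) ^ (-θ)) := by
      apply Real.exp_le_exp.mpr
      have hNθ : (N:ℝ) ^ (-θ) = ((N:ℝ) ^ θ)⁻¹ := by rw [Real.rpow_neg hN0.le]
      have hmi : (2 * (N:ℝ) ^ θ)⁻¹ ≤ (m:ℝ)⁻¹ := by
        apply inv_anti₀ hm0 hm2
      have h2 : (1 / 2) * S * (N:ℝ) ^ (-θ) ≤ S / m := by
        rw [hNθ, div_eq_mul_inv S (m:ℝ)]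
        have e : (1 / 2) * S * ((N:ℝ) ^ θ)⁻¹ = S * (2 * (N:ℝ) ^ θ)⁻¹ := by
          rw [mul_inv]; ring
        rw [e]
        exact mul_le_mul_of_nonneg_left hmi hS0
      linarith
    calc (∏ i ∈ Finset.range r, (1 - p (b + i * m)))
        ≤ ∏ i ∈ Finset.range r, Real.exp (-(p (b + i * m))) := step1
      _ = Real.exp (-(∑ j ∈ Finset.range r, p (b + j * m))) := step2
      _ ≤ Real.exp (-(1 / 2) * S * (N:ℝ) ^ (-θ)) := step3
  -- error term bound
  have hcb : ((r:ℝ) - 1) * c ≤ 2 * C * (N:ℝ) ^ (1 - θ * (γ + 1)) := by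
    have hr1 : (r:ℝ) - 1 = ((N - b) / m : ℕ) := by
      rw [hrdef]; push_cast; ring
    have h3 : (((N - b) / m : ℕ):ℝ) ≤ (N:ℝ) ^ (1 - θ) := by
      have hstep : (((N - b) / m : ℕ):ℝ) ≤ ((N - b : ℕ):ℝ) / (m:ℝ) := Nat.cast_div_le
      have hNb : ((N - b : ℕ):ℝ) ≤ (N:ℝ) := by exact_mod_cast Nat.sub_le N b
      have h4 : (N:ℝ) / (N:ℝ) ^ θ = (N:ℝ) ^ (1 - θ) := by
        rw [Real.rpow_sub hN0, Real.rpow_one]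
      calc (((N - b) / m : ℕ):ℝ) ≤ ((N - b : ℕ):ℝ) / (m:ℝ) := hstep
        _ ≤ (N:ℝ) / (m:ℝ) := by gcongr
        _ ≤ (N:ℝ) / (N:ℝ) ^ θ := by gcongr
        _ = (N:ℝ) ^ (1 - θ) := h4
    have h5 : (m:ℝ) ^ (-γ) ≤ (N:ℝ) ^ (-(θ * γ)) := by
      have hh : (m:ℝ) ^ (-γ) ≤ ((N:ℝ) ^ θ) ^ (-γ) :=
        Real.rpow_le_rpow_of_nonpos (by positivity) hNθm (by linarith)
      have he : ((N:ℝ) ^ θ) ^ (-γ) = (N:ℝ) ^ (-(θ * γ)) := by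
        rw [← Real.rpow_mul hN0.le]
        ring_nf
      rw [← he]; exact hh
    have hr0 : (0:ℝ) ≤ (r:ℝ) - 1 := by
      rw [hr1]; positivity
    have hfin : ((r:ℝ) - 1) * c ≤ (N:ℝ) ^ (1 - θ) * (C * (N:ℝ) ^ (-(θ * γ))) := by
      rw [hcdef]
      have := mul_le_mul (hr1 ▸ h3) (mul_le_mul_of_nonneg_left h5 (by linarith : (0:ℝ) ≤ C))
        (by positivity) (by positivity)
      exact this
    have he2 : (N:ℝ) ^ (1 - θ) * (C * (N:ℝ) ^ (-(θ * γ))) = C * (N:ℝ) ^ (1 - θ * (γ + 1)) := by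
      rw [mul_comm ((N:ℝ) ^ (1 - θ)), mul_assoc, ← Real.rpow_add hN0]
      congr 1
      ring_nf
    have hCN : 0 ≤ C * (N:ℝ) ^ (1 - θ * (γ + 1)) := by positivity
    calc ((r:ℝ) - 1) * c ≤ (N:ℝ) ^ (1 - θ) * (C * (N:ℝ) ^ (-(θ * γ))) := hfin
      _ = C * (N:ℝ) ^ (1 - θ * (γ + 1)) := he2
      _ ≤ 2 * C * (N:ℝ) ^ (1 - θ * (γ + 1)) := by linarith
  linarith [hkey, hPI, hmono, hprodexp, hcb]
end

section
/- Let (Ω, ℱ, P) be a probability space, let N ≥ 2, and let A₁, …, A_N be events. Let C ≥ 1 and γ > 0, and suppose that for every integer n ≥ 1, every k with k + n ≤ N, every event D in σ(A₁, …, A_k), and every event B in σ(A_{k+n}, …, A_N), one has |P(D ∩ B) − P(D)·P(B)| ≤ C·n^{−γ}. Then P(⋃_{k=1}^N A_k) ≥ 1 − exp(−(1/2)·S_N·N^{−2/(γ+2)}) − 2C·N^{−γ/(γ+2)}, where S_N := ∑_{k=1}^N P(A_k). -/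
open MeasureTheory

lemma aux_mixing_prod
    {Ω : Type*} [MeasurableSpace Ω] (P : Measure Ω) [IsProbabilityMeasure P]
    (N n : ℕ) (hn : 1 ≤ n)
    (A : ℕ → Set Ω) (hA : ∀ k ∈ Finset.Icc 1 N, MeasurableSet (A k))
    (C γ : ℝ) (hC : 0 ≤ C) (hγ : 0 < γ)
    (hmix : ∀ m : ℕ, 1 ≤ m → ∀ k, 1 ≤ k → k + m ≤ N →
      ∀ D : Set Ω,
        MeasurableSet[MeasurableSpace.generateFrom (A '' Set.Icc 1 k)] D →
      ∀ B : Set Ω,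
        MeasurableSet[MeasurableSpace.generateFrom (A '' Set.Icc (k + m) N)] B →
          |(P (D ∩ B)).toReal - (P D).toReal * (P B).toReal| ≤ C * (m : ℝ) ^ (-γ)) :
    ∀ t : Finset ℕ, t ⊆ Finset.Icc 1 N →
      (∀ a ∈ t, ∀ b ∈ t, a < b → a + n ≤ b) →
      (P (⋂ k ∈ t, (A k)ᶜ)).toReal ≤
        ∏ k ∈ t, (1 - (P (A k)).toReal) +
          ((t.card - 1 : ℕ) : ℝ) * (C * (n : ℝ) ^ (-γ)) := by
  have hα : 0 ≤ C * (n : ℝ) ^ (-γ) := by positivity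
  have hp1 : ∀ k, (P (A k)).toReal ≤ 1 := by
    intro k
    calc (P (A k)).toReal ≤ (P Set.univ).toReal :=
          ENNReal.toReal_mono (by simp) (measure_mono (Set.subset_univ _))
    _ = 1 := by simp
  have hcompl : ∀ k ∈ Finset.Icc 1 N, (P (A k)ᶜ).toReal = 1 - (P (A k)).toReal := by
    intro k hk
    rw [prob_compl_eq_one_sub (hA k hk), ENNReal.toReal_sub_of_le prob_le_one ENNReal.one_ne_top]
    simp
  intro t
  induction t using Finset.strongInductionOn with
  | _ t ih =>
    intro hsub hgap
    rcases t.eq_empty_or_nonempty with rfl | ht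
    · simp
    · set b := t.max' ht with hb
      have hbt : b ∈ t := t.max'_mem ht
      have hbIcc := Finset.mem_Icc.mp (hsub hbt)
      rcases (t.erase b).eq_empty_or_nonempty with h1 | ht'
      · have htb : t = {b} := by
          rcases (Finset.erase_eq_empty_iff t b).mp h1 with h | h
          · exact absurd h (Finset.nonempty_iff_ne_empty.mp ht)
          · exact h
        rw [htb]
        simp only [Finset.set_biInter_singleton, Finset.prod_singleton,
          Finset.card_singleton]
        rw [hcompl b (hsub hbt)]
        norm_num
      · set a := (t.erase b).max' ht' with ha
        have hat' : a ∈ t.erase b := (t.erase b).max'_mem ht'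
        have hat : a ∈ t := Finset.mem_of_mem_erase hat'
        have haIcc := Finset.mem_Icc.mp (hsub hat)
        have hab : a < b :=
          lt_of_le_of_ne (t.le_max' a hat) (Finset.ne_of_mem_erase hat')
        have hgap' : a + n ≤ b := hgap a hat b hbt hab
        set n' := b - a with hn'
        have hn'n : n ≤ n' := by omega
        have hn'1 : 1 ≤ n' := le_trans hn hn'n
        have han' : a + n' = b := by omega
        -- measurability in generated σ-algebras
        have hD : MeasurableSet[MeasurableSpace.generateFrom (A '' Set.Icc 1 a)]
            (⋂ k ∈ t.erase b, (A k)ᶜ) := by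
          refine Finset.measurableSet_biInter _ (fun k hk => MeasurableSet.compl ?_)
          refine MeasurableSpace.measurableSet_generateFrom ⟨k, ⟨?_, (t.erase b).le_max' k hk⟩, rfl⟩
          exact (Finset.mem_Icc.mp (hsub (Finset.mem_of_mem_erase hk))).1
        have hB : MeasurableSet[MeasurableSpace.generateFrom (A '' Set.Icc (a + n') N)]
            (A b)ᶜ := by
          refine MeasurableSet.compl (MeasurableSpace.measurableSet_generateFrom ⟨b, ⟨?_, hbIcc.2⟩, rfl⟩)
          omega
        have hmix' := hmix n' hn'1 a haIcc.1 (by omega) _ hD _ hB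
        have hDB : (P ((⋂ k ∈ t.erase b, (A k)ᶜ) ∩ (A b)ᶜ)).toReal ≤
            (P (⋂ k ∈ t.erase b, (A k)ᶜ)).toReal * (P (A b)ᶜ).toReal
              + C * (n' : ℝ) ^ (-γ) := by
          have := (abs_le.mp hmix').2
          linarith
        have hstep : C * (n' : ℝ) ^ (-γ) ≤ C * (n : ℝ) ^ (-γ) := by
          refine mul_le_mul_of_nonneg_left ?_ hC
          refine Real.rpow_le_rpow_of_nonpos ?_ (by exact_mod_cast hn'n) (by linarith)
          exact_mod_cast hn
        have hIH := ih (t.erase b) (Finset.erase_ssubset hbt)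
          (fun k hk => hsub (Finset.mem_of_mem_erase hk))
          (fun x hx y hy hxy => hgap x (Finset.mem_of_mem_erase hx)
            y (Finset.mem_of_mem_erase hy) hxy)
        -- rewrite the intersection
        have hins : t = insert b (t.erase b) := (Finset.insert_erase hbt).symm
        have hEq : (⋂ k ∈ t, (A k)ᶜ) = (⋂ k ∈ t.erase b, (A k)ᶜ) ∩ (A b)ᶜ := by
          conv_lhs => rw [hins]
          rw [Finset.set_biInter_insert, Set.inter_comm]
        rw [hEq]
        set Q := ∏ k ∈ t.erase b, (1 - (P (A k)).toReal) with hQ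
        have hQ0 : 0 ≤ Q := by
          refine Finset.prod_nonneg (fun k hk => ?_)
          have := hp1 k; linarith
        have hPB : (P (A b)ᶜ).toReal = 1 - (P (A b)).toReal := hcompl b (hsub hbt)
        have hpb0 : 0 ≤ (P (A b)).toReal := ENNReal.toReal_nonneg
        have hpb1 : (P (A b)).toReal ≤ 1 := hp1 b
        have hPD0 : 0 ≤ (P (⋂ k ∈ t.erase b, (A k)ᶜ)).toReal := ENNReal.toReal_nonneg
        have hprod : ∏ k ∈ t, (1 - (P (A k)).toReal)
            = (1 - (P (A b)).toReal) * Q := (Finset.mul_prod_erase t _ hbt).symm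
        have hcard : ((t.card - 1 : ℕ) : ℝ)
            = (((t.erase b).card - 1 : ℕ) : ℝ) + 1 := by
          have h2 : 1 ≤ (t.erase b).card := Finset.card_pos.mpr ht'
          have h3 : (t.erase b).card = t.card - 1 := Finset.card_erase_of_mem hbt
          have : t.card - 1 = ((t.erase b).card - 1) + 1 := by omega
          rw [this]; push_cast; ring
        set α := C * (n : ℝ) ^ (-γ) with hαdef
        set c' := (((t.erase b).card - 1 : ℕ) : ℝ) with hc'
        have hc'0 : 0 ≤ c' := Nat.cast_nonneg _
        rw [hPB] at hDB
        rw [hprod, hcard]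
        -- combine
        calc (P ((⋂ k ∈ t.erase b, (A k)ᶜ) ∩ (A b)ᶜ)).toReal
            ≤ (P (⋂ k ∈ t.erase b, (A k)ᶜ)).toReal * (1 - (P (A b)).toReal)
              + C * (n' : ℝ) ^ (-γ) := hDB
          _ ≤ (Q + c' * α) * (1 - (P (A b)).toReal) + α := by
              have := mul_le_mul_of_nonneg_right hIH (by linarith : (0:ℝ) ≤ 1 - (P (A b)).toReal)
              linarith
          _ ≤ (1 - (P (A b)).toReal) * Q + (c' + 1) * α := by
              have h4 : c' * α * (1 - (P (A b)).toReal) ≤ c' * α := by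
                have : 0 ≤ c' * α := mul_nonneg hc'0 hα
                nlinarith
              nlinarith
  
/-- Proposition (polynomial α-mixing spacings, special case `θ = 2/(γ+2)`):
`P(⋃ₖ A k) ≥ 1 − exp(−(1/2)·S_N·N^{−2/(γ+2)}) − 2C·N^{−γ/(γ+2)}`. -/
theorem polynomial_alpha_mixing_bound_special
    {Ω : Type*} [MeasurableSpace Ω] (P : Measure Ω) [IsProbabilityMeasure P]
    (N : ℕ) (hN : 2 ≤ N)
    (A : ℕ → Set Ω) (hA : ∀ k ∈ Finset.Icc 1 N, MeasurableSet (A k))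
    (C γ : ℝ) (hC : 1 ≤ C) (hγ : 0 < γ)
    (hmix : ∀ n : ℕ, 1 ≤ n → ∀ k, 1 ≤ k → k + n ≤ N →
      ∀ D : Set Ω,
        MeasurableSet[MeasurableSpace.generateFrom (A '' Set.Icc 1 k)] D →
      ∀ B : Set Ω,
        MeasurableSet[MeasurableSpace.generateFrom (A '' Set.Icc (k + n) N)] B →
          |(P (D ∩ B)).toReal - (P D).toReal * (P B).toReal| ≤ C * (n : ℝ) ^ (-γ)) :
    1 - Real.exp (-(1 / 2) * (∑ k ∈ Finset.Icc 1 N, (P (A k)).toReal) *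
          (N : ℝ) ^ (-(2 / (γ + 2)))) -
        2 * C * (N : ℝ) ^ (-(γ / (γ + 2))) ≤
      (P (⋃ k ∈ Finset.Icc 1 N, A k)).toReal := by
  set S := ∑ k ∈ Finset.Icc 1 N, (P (A k)).toReal with hS
  have hS0 : 0 ≤ S := Finset.sum_nonneg (fun _ _ => ENNReal.toReal_nonneg)
  have hC0 : (0:ℝ) ≤ C := by linarith
  have hNR : (2:ℝ) ≤ (N:ℝ) := by exact_mod_cast hN
  have hNpos : (0:ℝ) < N := by linarith
  set θ := 2 / (γ + 2) with hθ
  set β := γ / (γ + 2) with hβ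
  have hγ2 : (0:ℝ) < γ + 2 := by linarith
  have hθpos : 0 < θ := by rw [hθ]; positivity
  have hθ1 : θ ≤ 1 := by rw [hθ, div_le_one hγ2]; linarith
  have hNθ1 : (1:ℝ) ≤ (N:ℝ) ^ θ := Real.one_le_rpow (by linarith) hθpos.le
  have hNθpos : (0:ℝ) < (N:ℝ) ^ θ := by linarith
  set n := ⌈(N:ℝ) ^ θ⌉₊ with hn
  have hn1 : 1 ≤ n := Nat.one_le_ceil_iff.mpr hNθpos
  have hnlow : (N:ℝ) ^ θ ≤ (n:ℝ) := Nat.le_ceil _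
  have hnup : (n:ℝ) ≤ 2 * (N:ℝ) ^ θ := by
    have := Nat.ceil_lt_add_one hNθpos.le
    rw [← hn] at this
    linarith
  have hnpos : (0:ℝ) < (n:ℝ) := lt_of_lt_of_le hNθpos hnlow
  have hPU0 : (0:ℝ) ≤ (P (⋃ k ∈ Finset.Icc 1 N, A k)).toReal := ENNReal.toReal_nonneg
  by_cases hSpos : S ≤ 0
  · have hSz : S = 0 := le_antisymm hSpos hS0
    have hone : Real.exp (-(1 / 2) * S * (N:ℝ) ^ (-θ)) = 1 := by rw [hSz]; simp
    have h2 : (0:ℝ) ≤ 2 * C * (N:ℝ) ^ (-β) := by positivity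
    rw [hone]
    linarith
  · push_neg at hSpos
    classical
    have hpart : ∑ r ∈ Finset.range n,
        ∑ k ∈ (Finset.Icc 1 N).filter (fun k => k % n = r), (P (A k)).toReal = S := by
      rw [hS]
      exact Finset.sum_fiberwise_of_maps_to
        (fun k _ => Finset.mem_range.mpr (Nat.mod_lt _ (by omega))) _
    obtain ⟨r, _, hrge⟩ : ∃ r ∈ Finset.range n, S / (n:ℝ) ≤
        ∑ k ∈ (Finset.Icc 1 N).filter (fun k => k % n = r), (P (A k)).toReal := by
      apply Finset.exists_le_of_sum_le (Finset.nonempty_range_iff.mpr (by omega))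
      rw [hpart, Finset.sum_const, Finset.card_range, nsmul_eq_mul,
        mul_div_cancel₀ _ (ne_of_gt hnpos)]
    set s := (Finset.Icc 1 N).filter (fun k => k % n = r) with hsdef
    have hssub : s ⊆ Finset.Icc 1 N := Finset.filter_subset _ _
    have hgap : ∀ a ∈ s, ∀ b ∈ s, a < b → a + n ≤ b := by
      intro x hx y hy hxy
      have hx' := (Finset.mem_filter.mp hx).2
      have hy' := (Finset.mem_filter.mp hy).2
      have hdvd : n ∣ y - x :=
        (Nat.modEq_iff_dvd' (le_of_lt hxy)).mp (hx'.trans hy'.symm)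
      have := Nat.le_of_dvd (by omega) hdvd
      omega
    have haux := aux_mixing_prod P N n hn1 A hA C γ hC0 hγ hmix s hssub hgap
    have hUmeas : MeasurableSet (⋃ k ∈ s, A k) :=
      Finset.measurableSet_biUnion _ (fun k hk => hA k (hssub hk))
    have hcomplEq : (⋂ k ∈ s, (A k)ᶜ) = (⋃ k ∈ s, A k)ᶜ := by
      simp [Set.compl_iUnion]
    have hPU : (P (⋂ k ∈ s, (A k)ᶜ)).toReal = 1 - (P (⋃ k ∈ s, A k)).toReal := by
      rw [hcomplEq, prob_compl_eq_one_sub hUmeas,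
        ENNReal.toReal_sub_of_le prob_le_one ENNReal.one_ne_top]
      simp
    have hprodexp : ∏ k ∈ s, (1 - (P (A k)).toReal) ≤
        Real.exp (-(∑ k ∈ s, (P (A k)).toReal)) := by
      rw [← Finset.sum_neg_distrib, Real.exp_sum]
      refine Finset.prod_le_prod (fun k _ => ?_) (fun k _ => ?_)
      · have h1 : (P (A k)).toReal ≤ 1 := by
          calc (P (A k)).toReal ≤ (P Set.univ).toReal :=
                ENNReal.toReal_mono (by simp) (measure_mono (Set.subset_univ _))
          _ = 1 := by simp
        linarith
      · have := Real.add_one_le_exp (-(P (A k)).toReal)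
        linarith
    have hsum_ge : (1/2) * S * (N:ℝ) ^ (-θ) ≤ ∑ k ∈ s, (P (A k)).toReal := by
      refine le_trans ?_ hrge
      have h1 : S / (2 * (N:ℝ) ^ θ) ≤ S / (n:ℝ) :=
        div_le_div_of_nonneg_left hS0 hnpos hnup
      have h2 : (1/2) * S * (N:ℝ) ^ (-θ) = S / (2 * (N:ℝ) ^ θ) := by
        rw [Real.rpow_neg hNpos.le]
        field_simp
      linarith
    have hexp : Real.exp (-(∑ k ∈ s, (P (A k)).toReal)) ≤
        Real.exp (-(1 / 2) * S * (N:ℝ) ^ (-θ)) := by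
      apply Real.exp_le_exp.mpr
      linarith
    have hcard : (s.card - 1 : ℕ) ≤ N / n := by
      have hc : s.card ≤ N / n + 1 := by
        have := Finset.card_le_card_of_injOn (fun k => k / n)
          (s := s) (t := Finset.range (N / n + 1)) ?_ ?_
        · simpa using this
        · intro k hk
          have hkIcc := Finset.mem_Icc.mp (hssub hk)
          exact Finset.mem_range.mpr (Nat.lt_succ_of_le (Nat.div_le_div_right hkIcc.2))
        · intro k1 hk1 k2 hk2 he
          have h1 := (Finset.mem_filter.mp hk1).2
          have h2 := (Finset.mem_filter.mp hk2).2
          have e1 := Nat.div_add_mod k1 n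
          have e2 := Nat.div_add_mod k2 n
          simp only at he
          rw [← e1, ← e2, he, h1, h2]
      exact Nat.sub_le_iff_le_add.mpr hc
    have hcardR : ((s.card - 1 : ℕ) : ℝ) ≤ (N:ℝ) / (n:ℝ) :=
      le_trans (by exact_mod_cast Nat.cast_le.mpr hcard) Nat.cast_div_le
    have herr : ((s.card - 1 : ℕ) : ℝ) * (C * (n:ℝ) ^ (-γ)) ≤ 2 * C * (N:ℝ) ^ (-β) := by
      have h1 : (N:ℝ) / (n:ℝ) ≤ (N:ℝ) / (N:ℝ) ^ θ :=
        div_le_div_of_nonneg_left hNpos.le hNθpos hnlow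
      have h2 : (n:ℝ) ^ (-γ) ≤ ((N:ℝ) ^ θ) ^ (-γ) :=
        Real.rpow_le_rpow_of_nonpos hNθpos hnlow (by linarith)
      have h3 : ((s.card - 1 : ℕ) : ℝ) * (C * (n:ℝ) ^ (-γ)) ≤
          ((N:ℝ) / (N:ℝ) ^ θ) * (C * ((N:ℝ) ^ θ) ^ (-γ)) := by
        apply mul_le_mul (le_trans hcardR h1)
          (mul_le_mul_of_nonneg_left h2 hC0) (by positivity) (by positivity)
      refine le_trans h3 ?_
      have he : ((N:ℝ) / (N:ℝ) ^ θ) * (C * ((N:ℝ) ^ θ) ^ (-γ)) =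
          C * (N:ℝ) ^ (1 - θ + θ * (-γ)) := by
        rw [← Real.rpow_mul hNpos.le θ (-γ),
          show (N:ℝ) / (N:ℝ) ^ θ = (N:ℝ) ^ (1 - θ) by
            rw [Real.rpow_sub hNpos, Real.rpow_one],
          Real.rpow_add hNpos]
        ring
      have hexpeq : 1 - θ + θ * (-γ) = -β := by
        rw [hθ, hβ]
        field_simp
        ring
      rw [he, hexpeq]
      have hpos : (0:ℝ) ≤ C * (N:ℝ) ^ (-β) := by positivity
      linarith
    have hmono : (P (⋃ k ∈ s, A k)).toReal ≤ (P (⋃ k ∈ Finset.Icc 1 N, A k)).toReal := by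
      apply ENNReal.toReal_mono (measure_ne_top P _)
      apply measure_mono
      exact Set.iUnion₂_subset (fun k hk => Set.subset_biUnion_of_mem (hssub hk))
    linarith
end

section
/- Let (Ω, ℱ, P) be a probability space, let m ≥ 0 be an integer, and let (A_k)_{k≥1} be a sequence of events such that for every k ≥ 1 and every n > m, the σ-algebras σ(A₁, …, A_k) and σ(A_j : j ≥ k+n) are independent. Then for any two finite index sets I, J ⊆ ℕ with min{|i − j| : i ∈ I, j ∈ J} > m, the σ-algebras σ(A_i : i ∈ I) and σ(A_j : j ∈ J) are independent. -/
open MeasureTheory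

section Aux

variable {Ω : Type*} [MeasurableSpace Ω] (P : Measure Ω) [IsProbabilityMeasure P]

set_option linter.unusedSectionVars false in
private lemma biInter_mem_generateFrom (A : ℕ → Set Ω) (S : Finset ℕ) (X : Set ℕ)
    (hS : ∀ i ∈ S, i ∈ X) :
    MeasurableSet[MeasurableSpace.generateFrom (A '' X)] (⋂ i ∈ S, A i) := by
  refine Finset.measurableSet_biInter _ (fun i hi => ?_)
  exact MeasurableSpace.measurableSet_generateFrom ⟨i, hS i hi, rfl⟩

private lemma key_measure (m : ℕ) (A : ℕ → Set Ω)
    (hpf : ∀ k, 1 ≤ k → ∀ n, m < n →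
      ProbabilityTheory.Indep
        (MeasurableSpace.generateFrom (A '' Set.Icc 1 k))
        (MeasurableSpace.generateFrom (A '' Set.Ici (k + n))) P) :
    ∀ n : ℕ, ∀ I J : Finset ℕ, I.card + J.card ≤ n → ↑I ⊆ Set.Ici 1 → ↑J ⊆ Set.Ici 1 →
      (∀ i ∈ I, ∀ j ∈ J, m < Nat.dist i j) →
      P ((⋂ i ∈ I, A i) ∩ ⋂ j ∈ J, A j)
        = P (⋂ i ∈ I, A i) * P (⋂ j ∈ J, A j) := by
  intro n
  induction n with
  | zero =>
    intro I J hcard _ _ _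
    have hI : I = ∅ := Finset.card_eq_zero.mp (by omega)
    have hJ : J = ∅ := Finset.card_eq_zero.mp (by omega)
    subst hI; subst hJ
    simp
  | succ n IH =>
    -- main step, assuming some element of the first set dominates the second set
    have main : ∀ I J : Finset ℕ, I.card + J.card ≤ n + 1 → ↑I ⊆ Set.Ici 1 →
        ↑J ⊆ Set.Ici 1 → (∀ i ∈ I, ∀ j ∈ J, m < Nat.dist i j) →
        (∃ i₀ ∈ I, ∀ j ∈ J, j < i₀) →
        P ((⋂ i ∈ I, A i) ∩ ⋂ j ∈ J, A j)
          = P (⋂ i ∈ I, A i) * P (⋂ j ∈ J, A j) := by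
      intro I J hcard hI1 hJ1 hdist hdom
      rcases J.eq_empty_or_nonempty with hJ | hJ
      · subst hJ; simp [measure_univ]
      obtain ⟨i₀, hi₀I, hi₀⟩ := hdom
      have hc1 : 1 ≤ J.max' hJ := hJ1 (J.max'_mem hJ)
      set c := J.max' hJ with hc
      have hneq : ∀ i ∈ I, i ≠ c := by
        intro i hi hic
        have := hdist i hi c (J.max'_mem hJ)
        rw [hic, Nat.dist_self] at this
        omega
      -- split I around c
      classical
      set I₀ : Finset ℕ := I.filter (fun i => i < c) with hI₀
      set I₁ : Finset ℕ := I.filter (fun i => c < i) with hI₁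
      have hIsplit : I = I₀ ∪ I₁ := by
        ext i
        simp only [hI₀, hI₁, Finset.mem_union, Finset.mem_filter]
        constructor
        · intro hi
          have := hneq i hi
          rcases Nat.lt_or_ge i c with h | h
          · exact Or.inl ⟨hi, h⟩
          · exact Or.inr ⟨hi, lt_of_le_of_ne h (Ne.symm this)⟩
        · rintro (⟨hi, _⟩ | ⟨hi, _⟩) <;> exact hi
      have hIinter : (⋂ i ∈ I, A i) = (⋂ i ∈ I₀, A i) ∩ ⋂ i ∈ I₁, A i := by
        conv_lhs => rw [hIsplit]
        exact Finset.set_biInter_inter I₀ I₁ A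
      -- the past–future independence at the gap after c
      have hindep := hpf c hc1 (m + 1) (Nat.lt_succ_self m)
      rw [ProbabilityTheory.Indep_iff] at hindep
      -- membership facts
      have hmemB0 : MeasurableSet[MeasurableSpace.generateFrom (A '' Set.Icc 1 c)]
          (⋂ i ∈ I₀, A i) := by
        refine biInter_mem_generateFrom A I₀ _ (fun i hi => ?_)
        rw [hI₀] at hi
        exact ⟨hI1 (Finset.mem_filter.mp hi).1, le_of_lt (Finset.mem_filter.mp hi).2⟩
      have hmemB : MeasurableSet[MeasurableSpace.generateFrom (A '' Set.Icc 1 c)]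
          ((⋂ i ∈ I₀, A i) ∩ ⋂ j ∈ J, A j) := by
        refine MeasurableSet.inter hmemB0 ?_
        refine biInter_mem_generateFrom A J _ (fun j hj => ?_)
        exact ⟨hJ1 hj, J.le_max' j hj⟩
      have hmemC : MeasurableSet[MeasurableSpace.generateFrom (A '' Set.Ici (c + (m + 1)))]
          (⋂ i ∈ I₁, A i) := by
        refine biInter_mem_generateFrom A I₁ _ (fun i hi => ?_)
        rw [hI₁] at hi
        obtain ⟨hiI, hci⟩ := Finset.mem_filter.mp hi
        have hd := hdist i hiI c (J.max'_mem hJ)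
        have : Nat.dist i c = i - c := Nat.dist_eq_sub_of_le_right (le_of_lt hci)
        simp only [Set.mem_Ici]
        omega
      have hP1 : P (((⋂ i ∈ I₀, A i) ∩ ⋂ j ∈ J, A j) ∩ ⋂ i ∈ I₁, A i)
          = P ((⋂ i ∈ I₀, A i) ∩ ⋂ j ∈ J, A j) * P (⋂ i ∈ I₁, A i) :=
        hindep _ _ hmemB hmemC
      have hP2 : P ((⋂ i ∈ I₀, A i) ∩ ⋂ i ∈ I₁, A i)
          = P (⋂ i ∈ I₀, A i) * P (⋂ i ∈ I₁, A i) :=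
        hindep _ _ hmemB0 hmemC
      -- cardinality decreases
      have hI₀card : I₀.card + J.card ≤ n := by
        have hc_lt : c < i₀ := hi₀ c (J.max'_mem hJ)
        have hi₀notin : i₀ ∉ I₀ := by
          rw [hI₀]
          intro h
          have := (Finset.mem_filter.mp h).2
          omega
        have hssub : I₀ ⊂ I :=
          Finset.ssubset_iff_of_subset (Finset.filter_subset _ _) |>.mpr ⟨i₀, hi₀I, hi₀notin⟩
        have := Finset.card_lt_card hssub
        omega
      have hIH : P ((⋂ i ∈ I₀, A i) ∩ ⋂ j ∈ J, A j)
          = P (⋂ i ∈ I₀, A i) * P (⋂ j ∈ J, A j) := by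
        refine IH I₀ J hI₀card (fun i hi => hI1 (Finset.filter_subset _ _ hi)) hJ1 ?_
        exact fun i hi j hj => hdist i (Finset.filter_subset _ _ hi) j hj
      calc P ((⋂ i ∈ I, A i) ∩ ⋂ j ∈ J, A j)
          = P (((⋂ i ∈ I₀, A i) ∩ ⋂ j ∈ J, A j) ∩ ⋂ i ∈ I₁, A i) := by
            rw [hIinter, Set.inter_right_comm]
        _ = P ((⋂ i ∈ I₀, A i) ∩ ⋂ j ∈ J, A j) * P (⋂ i ∈ I₁, A i) := hP1
        _ = (P (⋂ i ∈ I₀, A i) * P (⋂ j ∈ J, A j)) * P (⋂ i ∈ I₁, A i) := by rw [hIH]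
        _ = (P (⋂ i ∈ I₀, A i) * P (⋂ i ∈ I₁, A i)) * P (⋂ j ∈ J, A j) := by ring
        _ = P ((⋂ i ∈ I₀, A i) ∩ ⋂ i ∈ I₁, A i) * P (⋂ j ∈ J, A j) := by rw [hP2]
        _ = P (⋂ i ∈ I, A i) * P (⋂ j ∈ J, A j) := by rw [hIinter]
    -- now the general case
    intro I J hcard hI1 hJ1 hdist
    rcases I.eq_empty_or_nonempty with hI | hI
    · subst hI; simp [measure_univ]
    rcases J.eq_empty_or_nonempty with hJ | hJ
    · subst hJ; simp [measure_univ]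
    have hne : (I ∪ J).Nonempty := Finset.Nonempty.mono Finset.subset_union_left hI
    have hdisj : ∀ i ∈ I, ∀ j ∈ J, i ≠ j := by
      intro i hi j hj hij
      have := hdist i hi j hj
      rw [hij, Nat.dist_self] at this
      omega
    set M := (I ∪ J).max' hne with hM
    have hMmem := (I ∪ J).max'_mem hne
    rw [Finset.mem_union] at hMmem
    rcases hMmem with hMI | hMJ
    · refine main I J hcard hI1 hJ1 hdist ⟨M, hMI, fun j hj => ?_⟩
      have hle : j ≤ M := Finset.le_max' _ j (Finset.mem_union_right I hj)
      exact lt_of_le_of_ne hle fun h => hdisj M hMI j hj (h ▸ rfl)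
    · have h := main J I (by omega) hJ1 hI1
        (fun j hj i hi => Nat.dist_comm j i ▸ hdist i hi j hj)
        ⟨M, hMJ, fun i hi => ?_⟩
      · rw [Set.inter_comm] at h
        rw [h]; ring
      · have hle : i ≤ M := Finset.le_max' _ i (Finset.mem_union_left J hi)
        exact lt_of_le_of_ne hle fun h => hdisj i hi M hMJ h

end Aux

/-- Remark (m-dependence: past–future independence implies separated-subcollection
independence): if `σ(A 1, …, A k)` and `σ(A j : j ≥ k + n)` are independent for every
`k ≥ 1` and every `n > m`, then for any two finite index sets `I, J ⊆ {1, 2, …}` with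
`dist(I, J) > m`, the σ-algebras `σ(A i : i ∈ I)` and `σ(A j : j ∈ J)` are independent. -/
theorem past_future_implies_separated_independence
    {Ω : Type*} [MeasurableSpace Ω] (P : Measure Ω) [IsProbabilityMeasure P]
    (m : ℕ) (A : ℕ → Set Ω) (hA : ∀ k, 1 ≤ k → MeasurableSet (A k))
    (hpf : ∀ k, 1 ≤ k → ∀ n, m < n →
      ProbabilityTheory.Indep
        (MeasurableSpace.generateFrom (A '' Set.Icc 1 k))
        (MeasurableSpace.generateFrom (A '' Set.Ici (k + n))) P) :
    ∀ I J : Finset ℕ, ↑I ⊆ Set.Ici 1 → ↑J ⊆ Set.Ici 1 →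
      (∀ i ∈ I, ∀ j ∈ J, m < Nat.dist i j) →
      ProbabilityTheory.Indep
        (MeasurableSpace.generateFrom (A '' ↑I))
        (MeasurableSpace.generateFrom (A '' ↑J)) P := by
  intro I J hI1 hJ1 hdist
  classical
  -- π-systems of finite intersections
  set pI : Set (Set Ω) := {s | ∃ S : Finset ℕ, S.Nonempty ∧ S ⊆ I ∧ s = ⋂ i ∈ S, A i} with hpI
  set pJ : Set (Set Ω) := {s | ∃ T : Finset ℕ, T.Nonempty ∧ T ⊆ J ∧ s = ⋂ j ∈ T, A j} with hpJ
  have hgen : ∀ (K : Finset ℕ),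
      MeasurableSpace.generateFrom (A '' ↑K)
        = MeasurableSpace.generateFrom
            {s | ∃ S : Finset ℕ, S.Nonempty ∧ S ⊆ K ∧ s = ⋂ i ∈ S, A i} := by
    intro K
    refine le_antisymm (MeasurableSpace.generateFrom_le ?_) (MeasurableSpace.generateFrom_le ?_)
    · rintro s ⟨i, hi, rfl⟩
      refine MeasurableSpace.measurableSet_generateFrom
        ⟨{i}, Finset.singleton_nonempty i, ?_, ?_⟩
      · simpa using hi
      · simp
    · rintro s ⟨S, _, hSK, rfl⟩
      exact biInter_mem_generateFrom A S ↑K (fun i hi => hSK hi)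
  have hpi : ∀ (K : Finset ℕ),
      IsPiSystem {s | ∃ S : Finset ℕ, S.Nonempty ∧ S ⊆ K ∧ s = ⋂ i ∈ S, A i} := by
    rintro K s ⟨S, hSne, hSK, rfl⟩ t ⟨T, hTne, hTK, rfl⟩ _
    exact ⟨S ∪ T, Finset.Nonempty.mono Finset.subset_union_left hSne,
      Finset.union_subset hSK hTK, (Finset.set_biInter_inter S T A).symm⟩
  refine ProbabilityTheory.IndepSets.indep ?_ ?_ (hpi I) (hpi J) (hgen I) (hgen J) ?_
  · refine MeasurableSpace.generateFrom_le ?_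
    rintro s ⟨i, hi, rfl⟩
    exact hA i (hI1 hi)
  · refine MeasurableSpace.generateFrom_le ?_
    rintro s ⟨j, hj, rfl⟩
    exact hA j (hJ1 hj)
  · rintro s t ⟨S, _, hSI, rfl⟩ ⟨T, _, hTJ, rfl⟩
    have h := key_measure P m A hpf (S.card + T.card) S T le_rfl
      (fun i hi => hI1 (hSI hi)) (fun j hj => hJ1 (hTJ hj))
      (fun i hi j hj => hdist i (hSI hi) j (hTJ hj))
    refine Filter.Eventually.of_forall fun a => ?_
    simpa using h
end
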